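/- The variance of the DRND statistic equals Var[y_n] = 2/n² + 4μ²/(n σ²). -/

import Mathlib

open MeasureTheory ProbabilityTheory Finset

open Real Set
open scoped NNReal ENNReal


lemma aux_integrable_pow_mul_exp {b : ℝ} (hb : 0 < b) (k : ℕ) :
    Integrable (fun x : ℝ => x ^ k * rexp (-b * x ^ 2)) := by
  have := integrable_rpow_mul_exp_neg_mul_sq hb (s := (k : ℝ))
    (lt_of_lt_of_le neg_one_lt_zero (Nat.cast_nonneg k))
  simpa [Real.rpow_natCast] using this

lemma aux_integral_even_pow {b : ℝ} (hb : 0 < b) (k : ℕ) (hk : Even k) :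
    ∫ x : ℝ, x ^ k * rexp (-b * x ^ 2) =
      b ^ (-((k : ℝ) + 1) / 2) * Real.Gamma (((k : ℝ) + 1) / 2) := by
  have hint := aux_integrable_pow_mul_exp hb k
  have hsplit : (∫ x in Iic (0:ℝ), x ^ k * rexp (-b * x ^ 2)) +
      (∫ x in Ioi (0:ℝ), x ^ k * rexp (-b * x ^ 2)) =
      ∫ x : ℝ, x ^ k * rexp (-b * x ^ 2) :=
    intervalIntegral.integral_Iic_add_Ioi hint.integrableOn hint.integrableOn
  have hneg : ∫ x in Iic (0:ℝ), x ^ k * rexp (-b * x ^ 2) =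
      ∫ x in Ioi (0:ℝ), x ^ k * rexp (-b * x ^ 2) := by
    have : ∫ x in Iic (0:ℝ), x ^ k * rexp (-b * x ^ 2) =
        ∫ x in Iic (0:ℝ), (-x) ^ k * rexp (-b * (-x) ^ 2) := by
      refine setIntegral_congr_fun measurableSet_Iic (fun x _ => ?_)
      rw [hk.neg_pow, neg_sq]
    rw [this, integral_comp_neg_Iic 0 (fun x => x ^ k * rexp (-b * x ^ 2)),
      neg_zero]
  have hIoi : ∫ x in Ioi (0:ℝ), x ^ k * rexp (-b * x ^ 2) =
      b ^ (-((k:ℝ) + 1) / 2) * (1 / 2) * Real.Gamma (((k:ℝ) + 1) / 2) := by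
    have h2 := integral_rpow_mul_exp_neg_mul_rpow (p := 2) (q := (k:ℝ)) (b := b)
      (by norm_num) (lt_of_lt_of_le neg_one_lt_zero (Nat.cast_nonneg k)) hb
    rw [← h2]
    refine setIntegral_congr_fun measurableSet_Ioi (fun x hx => ?_)
    rw [Real.rpow_natCast, Real.rpow_two]
  rw [← hsplit, hneg, hIoi]; ring

lemma gauss_integral_eq (v : ℝ≥0) (hv : v ≠ 0) (g : ℝ → ℝ) :
    ∫ x, g x ∂(gaussianReal 0 v) = ∫ x, gaussianPDFReal 0 v x * g x := by
  rw [gaussianReal_of_var_ne_zero 0 hv]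
  have : (gaussianPDF 0 v) = fun x => ((gaussianPDFReal 0 v x).toNNReal : ℝ≥0∞) := rfl
  rw [this, integral_withDensity_eq_integral_smul
    (measurable_gaussianPDFReal 0 v).real_toNNReal g]
  refine integral_congr_ae (Filter.Eventually.of_forall fun x => ?_)
  simp [NNReal.smul_def, Real.coe_toNNReal _ (gaussianPDFReal_nonneg 0 v x)]

lemma gauss_integrable_iff (v : ℝ≥0) (hv : v ≠ 0) (g : ℝ → ℝ)
    (hg : Measurable g) :
    Integrable g (gaussianReal 0 v) ↔
      Integrable (fun x => g x * gaussianPDFReal 0 v x) := by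
  rw [gaussianReal_of_var_ne_zero 0 hv, gaussianPDF_def,
    integrable_withDensity_iff (measurable_gaussianPDFReal 0 v).ennreal_ofReal
      (Filter.Eventually.of_forall fun x => ENNReal.ofReal_lt_top)]
  refine integrable_congr (Filter.Eventually.of_forall fun x => ?_)
  simp only [ENNReal.toReal_ofReal (gaussianPDFReal_nonneg 0 v x)]

lemma gauss_pdf_mul (v : ℝ≥0) (hv : v ≠ 0) (k : ℕ) (x : ℝ) :
    gaussianPDFReal 0 v x * x ^ k =
      (Real.sqrt (2 * Real.pi * v))⁻¹ * (x ^ k * rexp (-(2 * (v:ℝ))⁻¹ * x ^ 2)) := by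
  have hv' : (0:ℝ) < v := lt_of_le_of_ne v.2 (by exact_mod_cast (Ne.symm hv))
  rw [gaussianPDFReal]
  rw [show -(x - 0) ^ 2 / (2 * (v:ℝ)) = -(2 * (v:ℝ))⁻¹ * x ^ 2 by field_simp; ring]
  ring

lemma gauss_integrable_pow (v : ℝ≥0) (hv : v ≠ 0) (k : ℕ) :
    Integrable (fun x => x ^ k) (gaussianReal 0 v) := by
  have hv' : (0:ℝ) < v := lt_of_le_of_ne v.2 (by exact_mod_cast (Ne.symm hv))
  rw [gauss_integrable_iff v hv _ (by fun_prop : Measurable fun x : ℝ => x ^ k)]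
  have : (fun x : ℝ => x ^ k * gaussianPDFReal 0 v x) =
      fun x => (Real.sqrt (2 * Real.pi * v))⁻¹ * (x ^ k * rexp (-(2 * (v:ℝ))⁻¹ * x ^ 2)) := by
    funext x; rw [mul_comm, gauss_pdf_mul v hv]
  rw [this]
  exact (aux_integrable_pow_mul_exp (by positivity) k).const_mul _

lemma gauss_moment_odd (v : ℝ≥0) (hv : v ≠ 0) (k : ℕ) (hk : Odd k) :
    ∫ x, x ^ k ∂(gaussianReal 0 v) = 0 := by
  have hmap := gaussianReal_map_const_mul (μ := 0) (v := v) (-1)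
  have hvv : NNReal.mk ((-1:ℝ) ^ 2) (sq_nonneg _) = 1 := by
    ext
    norm_num
  rw [mul_zero, hvv, one_mul] at hmap
  have hme : Measurable fun x : ℝ => x ^ k := by fun_prop
  have h1 : ∫ x, x ^ k ∂(gaussianReal 0 v) =
      ∫ x, ((-1) * x) ^ k ∂(gaussianReal 0 v) := by
    conv_lhs => rw [← hmap]
    rw [integral_map (by fun_prop) hme.aestronglyMeasurable]
  have h2 : ∫ x, ((-1:ℝ) * x) ^ k ∂(gaussianReal 0 v) =
      - ∫ x, x ^ k ∂(gaussianReal 0 v) := by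
    rw [← integral_neg]
    congr 1; funext x
    rw [mul_pow, hk.neg_one_pow]; ring
  linarith [h1, h2]

lemma rpow_half_aux (a : ℝ) (ha : 0 < a) (m : ℕ) :
    (a⁻¹) ^ (-(((2 * m + 1 : ℕ) : ℝ)) / 2) = a ^ m * Real.sqrt a := by
  rw [Real.inv_rpow ha.le, ← Real.rpow_neg ha.le, neg_div, neg_neg]
  rw [show (((2 * m + 1 : ℕ) : ℝ)) / 2 = (m : ℝ) + 1 / 2 by push_cast; ring]
  rw [Real.rpow_add ha, Real.rpow_natCast, Real.sqrt_eq_rpow]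

lemma gauss_moment_even_aux (v : ℝ≥0) (hv : v ≠ 0) (k : ℕ) (hk : Even k) :
    ∫ x, x ^ k ∂(gaussianReal 0 v) =
      (Real.sqrt (2 * Real.pi * v))⁻¹ *
        ((2 * (v:ℝ))⁻¹ ^ (-((k : ℝ) + 1) / 2) * Real.Gamma (((k : ℝ) + 1) / 2)) := by
  have hv' : (0:ℝ) < v := lt_of_le_of_ne v.2 (by exact_mod_cast (Ne.symm hv))
  rw [gauss_integral_eq v hv]
  have : (fun x : ℝ => gaussianPDFReal 0 v x * x ^ k) =
      fun x => (Real.sqrt (2 * Real.pi * v))⁻¹ * (x ^ k * rexp (-(2 * (v:ℝ))⁻¹ * x ^ 2)) := by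
    funext x; exact gauss_pdf_mul v hv k x
  rw [this, integral_const_mul, aux_integral_even_pow (by positivity) k hk]

lemma gauss_moment_two (v : ℝ≥0) (hv : v ≠ 0) :
    ∫ x, x ^ 2 ∂(gaussianReal 0 v) = v := by
  have hv' : (0:ℝ) < v := lt_of_le_of_ne v.2 (by exact_mod_cast (Ne.symm hv))
  rw [gauss_moment_even_aux v hv 2 (by norm_num)]
  have hr : ((2 * (v:ℝ))⁻¹) ^ (-((2:ℕ) + 1 : ℝ) / 2) = (2 * (v:ℝ)) ^ 1 * Real.sqrt (2 * v) := by
    have := rpow_half_aux (2 * (v:ℝ)) (by positivity) 1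
    norm_num at this ⊢
    convert this using 2
  have hG : Real.Gamma (((2:ℕ) : ℝ) + 1) / 2 = 1 := by norm_num [Real.Gamma_nat_eq_factorial]
  have hG2 : Real.Gamma ((((2:ℕ) : ℝ) + 1) / 2) = Real.sqrt Real.pi / 2 := by
    rw [show ((((2:ℕ):ℝ)) + 1) / 2 = 1/2 + 1 by norm_num,
      Real.Gamma_add_one (by norm_num), Real.Gamma_one_half_eq]
    ring
  rw [hG2]
  push_cast at hr ⊢
  rw [hr]
  have hsq : Real.sqrt (2 * Real.pi * v) = Real.sqrt (2 * v) * Real.sqrt Real.pi := by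
    rw [← Real.sqrt_mul (by positivity)]; ring_nf
  rw [hsq]
  have h1 : Real.sqrt (2 * (v:ℝ)) ≠ 0 := by positivity
  have h2 : Real.sqrt Real.pi ≠ 0 := by positivity
  field_simp

lemma gauss_moment_four (v : ℝ≥0) (hv : v ≠ 0) :
    ∫ x, x ^ 4 ∂(gaussianReal 0 v) = 3 * (v:ℝ) ^ 2 := by
  have hv' : (0:ℝ) < v := lt_of_le_of_ne v.2 (by exact_mod_cast (Ne.symm hv))
  rw [gauss_moment_even_aux v hv 4 (by decide)]
  have hr : ((2 * (v:ℝ))⁻¹) ^ (-((4:ℕ) + 1 : ℝ) / 2) = (2 * (v:ℝ)) ^ 2 * Real.sqrt (2 * v) := by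
    have := rpow_half_aux (2 * (v:ℝ)) (by positivity) 2
    norm_num at this ⊢
    convert this using 2
  have hG2 : Real.Gamma ((((4:ℕ) : ℝ) + 1) / 2) = 3 * Real.sqrt Real.pi / 4 := by
    rw [show ((((4:ℕ):ℝ)) + 1) / 2 = (1/2 + 1) + 1 by norm_num,
      Real.Gamma_add_one (by norm_num), Real.Gamma_add_one (by norm_num),
      Real.Gamma_one_half_eq]
    ring
  rw [hG2]
  push_cast at hr ⊢
  rw [hr]
  have hsq : Real.sqrt (2 * Real.pi * v) = Real.sqrt (2 * v) * Real.sqrt Real.pi := by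
    rw [← Real.sqrt_mul (by positivity)]; ring_nf
  rw [hsq]
  have h1 : Real.sqrt (2 * (v:ℝ)) ≠ 0 := by positivity
  have h2 : Real.sqrt Real.pi ≠ 0 := by positivity
  field_simp
  ring


lemma indep_sum_moments {Ω : Type*} [MeasurableSpace Ω] (P : Measure Ω)
    [IsProbabilityMeasure P] {n : ℕ} {g : Fin n → Ω → ℝ}
    (hgmeas : ∀ i, Measurable (g i))
    (hindep : iIndepFun g P) (V : ℝ)
    (hint : ∀ i, ∀ k, k ≤ 4 → Integrable (fun ω => g i ω ^ k) P)
    (h1 : ∀ i, ∫ ω, g i ω ∂P = 0) (h2 : ∀ i, ∫ ω, g i ω ^ 2 ∂P = V)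
    (h3 : ∀ i, ∫ ω, g i ω ^ 3 ∂P = 0) (h4 : ∀ i, ∫ ω, g i ω ^ 4 ∂P = 3 * V ^ 2)
    (s : Finset (Fin n)) :
    (∀ k, k ≤ 4 → Integrable (fun ω => (∑ i ∈ s, g i ω) ^ k) P) ∧
    (∫ ω, (∑ i ∈ s, g i ω) ^ 1 ∂P = 0) ∧
    (∫ ω, (∑ i ∈ s, g i ω) ^ 2 ∂P = s.card * V) ∧
    (∫ ω, (∑ i ∈ s, g i ω) ^ 3 ∂P = 0) ∧
    (∫ ω, (∑ i ∈ s, g i ω) ^ 4 ∂P = 3 * (s.card : ℝ) ^ 2 * V ^ 2) := by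
  classical
  induction s using Finset.induction_on with
  | empty =>
      refine ⟨fun k hk => ?_, by simp, by simp, by simp, by simp⟩
      simpa using (integrable_const ((0:ℝ) ^ k))
  | @insert j s hj IH =>
      obtain ⟨IHint, IH1, IH2, IH3, IH4⟩ := IH
      set S : Ω → ℝ := fun ω => ∑ i ∈ s, g i ω with hS
      set X : Ω → ℝ := g j with hX
      have hSmeas : Measurable S := by
        apply Finset.measurable_sum
        exact fun i _ => hgmeas i
      have hIndep : IndepFun X S P := by
        have := (hindep.indepFun_finset_sum_of_notMem hgmeas hj).symm
        have heq : (∑ i ∈ s, g i) = S := by funext ω; simp [hS]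
        rwa [heq] at this
      -- moments of X
      have hXm : ∀ k, k ≤ 4 → Integrable (fun ω => X ω ^ k) P := hint j
      -- independence of powers
      have hIndepPow : ∀ a b : ℕ, IndepFun (fun ω => X ω ^ a) (fun ω => S ω ^ b) P := by
        intro a b
        exact hIndep.comp (measurable_id.pow_const a) (measurable_id.pow_const b)
      have hprodInt : ∀ a b : ℕ, a ≤ 4 → b ≤ 4 →
          Integrable (fun ω => X ω ^ a * S ω ^ b) P := by
        intro a b ha hb
        exact (hIndepPow a b).integrable_mul (hXm a ha) (IHint b hb)
      have hprodVal : ∀ a b : ℕ, a ≤ 4 → b ≤ 4 →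
          ∫ ω, X ω ^ a * S ω ^ b ∂P =
            (∫ ω, X ω ^ a ∂P) * ∫ ω, S ω ^ b ∂P := by
        intro a b ha hb
        exact (hIndepPow a b).integral_fun_mul_eq_mul_integral (hXm a ha).aestronglyMeasurable (IHint b hb).aestronglyMeasurable
      have hsum : ∀ ω, ∑ i ∈ insert j s, g i ω = X ω + S ω := by
        intro ω; rw [Finset.sum_insert hj]
      -- binomial expansion of the integrand
      have hexpand : ∀ k : ℕ, ∀ ω, (∑ i ∈ insert j s, g i ω) ^ k =
          ∑ m ∈ Finset.range (k + 1), X ω ^ m * S ω ^ (k - m) * (k.choose m) := by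
        intro k ω; rw [hsum ω, add_pow]
      have hintk : ∀ k, k ≤ 4 → Integrable (fun ω => (∑ i ∈ insert j s, g i ω) ^ k) P := by
        intro k hk
        have : (fun ω => (∑ i ∈ insert j s, g i ω) ^ k) =
            fun ω => ∑ m ∈ Finset.range (k + 1), X ω ^ m * S ω ^ (k - m) * (k.choose m) := by
          funext ω; exact hexpand k ω
        rw [this]
        apply integrable_finset_sum
        intro m hm
        have hm' : m ≤ 4 := le_trans (Nat.lt_succ_iff.mp (Finset.mem_range.mp hm)) hk
        have hkm : k - m ≤ 4 := le_trans (Nat.sub_le _ _) hk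
        exact (hprodInt m (k - m) hm' hkm).mul_const _
      have hintkval : ∀ k, k ≤ 4 → ∫ ω, (∑ i ∈ insert j s, g i ω) ^ k ∂P =
          ∑ m ∈ Finset.range (k + 1),
            (∫ ω, X ω ^ m ∂P) * (∫ ω, S ω ^ (k - m) ∂P) * (k.choose m) := by
        intro k hk
        have : (fun ω => (∑ i ∈ insert j s, g i ω) ^ k) =
            fun ω => ∑ m ∈ Finset.range (k + 1), X ω ^ m * S ω ^ (k - m) * (k.choose m) := by
          funext ω; exact hexpand k ω
        rw [this, integral_finset_sum]
        · refine Finset.sum_congr rfl fun m hm => ?_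
          have hm' : m ≤ 4 := le_trans (Nat.lt_succ_iff.mp (Finset.mem_range.mp hm)) hk
          have hkm : k - m ≤ 4 := le_trans (Nat.sub_le _ _) hk
          rw [integral_mul_const, hprodVal m (k - m) hm' hkm]
        · intro m hm
          have hm' : m ≤ 4 := le_trans (Nat.lt_succ_iff.mp (Finset.mem_range.mp hm)) hk
          have hkm : k - m ≤ 4 := le_trans (Nat.sub_le _ _) hk
          exact (hprodInt m (k - m) hm' hkm).mul_const _
      -- individual moments
      have hX0 : ∫ ω, X ω ^ 0 ∂P = 1 := by simp
      have hX1 : ∫ ω, X ω ^ 1 ∂P = 0 := by simpa using h1 j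
      have hX2 : ∫ ω, X ω ^ 2 ∂P = V := h2 j
      have hX3 : ∫ ω, X ω ^ 3 ∂P = 0 := h3 j
      have hX4 : ∫ ω, X ω ^ 4 ∂P = 3 * V ^ 2 := h4 j
      have hS0 : ∫ ω, S ω ^ 0 ∂P = 1 := by simp
      have hS1 : ∫ ω, S ω ^ 1 ∂P = 0 := IH1
      have hS2 : ∫ ω, S ω ^ 2 ∂P = s.card * V := IH2
      have hS3 : ∫ ω, S ω ^ 3 ∂P = 0 := IH3
      have hS4 : ∫ ω, S ω ^ 4 ∂P = 3 * (s.card : ℝ) ^ 2 * V ^ 2 := IH4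
      have hcard : ((insert j s).card : ℝ) = (s.card : ℝ) + 1 := by
        rw [Finset.card_insert_of_notMem hj]; push_cast; ring
      have hX1' : ∫ ω, X ω ∂P = 0 := h1 j
      have hS1' : ∫ ω, S ω ∂P = 0 := by simpa using IH1
      have hch : ((Nat.choose 4 2 : ℕ) : ℝ) = 6 := by norm_num [show Nat.choose 4 2 = 6 from rfl]
      refine ⟨hintk, ?_, ?_, ?_, ?_⟩
      · rw [hintkval 1 (by norm_num)]
        simp [Finset.sum_range_succ, hX0, hX1, hS0, hS1, hX1', hS1']
      · rw [hintkval 2 (by norm_num), hcard]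
        simp [Finset.sum_range_succ, hX0, hX1, hX2, hS0, hS1, hS2, hX1', hS1']
        ring
      · rw [hintkval 3 (by norm_num)]
        simp [Finset.sum_range_succ, hX0, hX1, hX2, hX3, hS0, hS1, hS2, hS3, hX1', hS1']
      · rw [hintkval 4 (by norm_num), hcard]
        simp [Finset.sum_range_succ, hX0, hX1, hX2, hX3, hX4, hS0, hS1, hS2, hS3, hS4, hX1', hS1']
        rw [hch]
        ring

/-- The variance of the DRND statistic equals `Var[y_n] = 2/n² + 4μ²/(n σ²)`,
where `y_n = (f̄² − μ²)/σ²` and `f̄` is the sample mean of `n` i.i.d. Gaussian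
`N(μ, σ²)` random variables. -/
theorem drnd_variance
    {Ω : Type*} [MeasurableSpace Ω] (P : Measure Ω) [IsProbabilityMeasure P]
    (n : ℕ) (hn : 0 < n) (μ σ : ℝ) (hσ : 0 < σ)
    (f : Fin n → Ω → ℝ) (hmeas : ∀ i, Measurable (f i))
    (hindep : iIndepFun f P)
    (hdist : ∀ i, Measure.map (f i) P = gaussianReal μ ⟨σ ^ 2, sq_nonneg σ⟩) :
    variance (fun ω => (((∑ i, f i ω) / n) ^ 2 - μ ^ 2) / σ ^ 2) P =
      2 / n ^ 2 + 4 * μ ^ 2 / (n * σ ^ 2) := by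
  have hσ2 : (σ:ℝ) ^ 2 ≠ 0 := by positivity
  have hn' : (n:ℝ) ≠ 0 := Nat.cast_ne_zero.mpr hn.ne'
  set v : ℝ≥0 := ⟨σ ^ 2, sq_nonneg σ⟩ with hvdef
  have hv : v ≠ 0 := by
    intro h
    apply hσ2
    calc σ ^ 2 = (v : ℝ) := rfl
    _ = ((0:ℝ≥0) : ℝ) := by rw [h]
    _ = 0 := rfl
  set g : Fin n → Ω → ℝ := fun i ω => f i ω - μ with hgdef
  have hgmeas : ∀ i, Measurable (g i) := fun i => (hmeas i).sub measurable_const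
  have hgindep : iIndepFun g P := by
    have h := hindep.comp (fun _ => (· + (-μ))) (fun _ => measurable_add_const (-μ))
    have heq : (fun i => (· + (-μ)) ∘ f i) = g := by
      funext i ω; simp [hgdef, sub_eq_add_neg]
    rwa [heq] at h
  have hgmap : ∀ i, Measure.map (g i) P = gaussianReal 0 v := by
    intro i
    have : g i = (· + (-μ)) ∘ f i := by funext ω; simp [hgdef, sub_eq_add_neg]
    rw [this, ← Measure.map_map (measurable_add_const (-μ)) (hmeas i), hdist i,
      gaussianReal_map_add_const (-μ)]
    simp
  have hgint : ∀ i, ∀ k, k ≤ 4 → Integrable (fun ω => g i ω ^ k) P := by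
    intro i k _
    have h := gauss_integrable_pow v hv k
    rw [← hgmap i] at h
    have := (integrable_map_measure
      (by fun_prop : Measurable fun x : ℝ => x ^ k).aestronglyMeasurable
      ((hgmeas i).aemeasurable)).mp h
    exact this
  have hgmom : ∀ i, ∀ k, ∫ ω, g i ω ^ k ∂P = ∫ x, x ^ k ∂(gaussianReal 0 v) := by
    intro i k
    rw [← hgmap i, integral_map ((hgmeas i).aemeasurable)
      (by fun_prop : Measurable fun x : ℝ => x ^ k).aestronglyMeasurable]
  have h1 : ∀ i, ∫ ω, g i ω ∂P = 0 := by
    intro i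
    have h := hgmom i 1
    rw [gauss_moment_odd v hv 1 (by decide)] at h
    simpa using h
  have h2 : ∀ i, ∫ ω, g i ω ^ 2 ∂P = σ ^ 2 := by
    intro i; rw [hgmom i 2, gauss_moment_two v hv]; rfl
  have h3 : ∀ i, ∫ ω, g i ω ^ 3 ∂P = 0 := by
    intro i; rw [hgmom i 3, gauss_moment_odd v hv 3 (by decide)]
  have h4 : ∀ i, ∫ ω, g i ω ^ 4 ∂P = 3 * (σ ^ 2) ^ 2 := by
    intro i; rw [hgmom i 4, gauss_moment_four v hv]; rfl
  obtain ⟨Sint, S1, S2, S3, S4⟩ := indep_sum_moments P hgmeas hgindep (σ ^ 2)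
    hgint h1 h2 h3 h4 Finset.univ
  set S : Ω → ℝ := fun ω => ∑ i, g i ω with hSdef
  have hcard : ((Finset.univ : Finset (Fin n)).card : ℝ) = n := by
    simp
  rw [hcard] at S2
  rw [hcard] at S4
  have hSmeas : Measurable S := Finset.measurable_sum _ (fun i _ => hgmeas i)
  have hSint1 : Integrable S P := by
    have h := Sint 1 (by norm_num)
    simpa only [pow_one] using h
  have hSint2 : Integrable (fun ω => S ω ^ 2) P := Sint 2 (by norm_num)
  have hSint3 : Integrable (fun ω => S ω ^ 3) P := Sint 3 (by norm_num)
  have hSint4 : Integrable (fun ω => S ω ^ 4) P := Sint 4 (by norm_num)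
  have hS1 : ∫ ω, S ω ∂P = 0 := by simpa only [pow_one] using S1
  -- rewrite the statistic
  set a : ℝ := 1 / (σ ^ 2 * n ^ 2) with hadef
  set b : ℝ := 2 * μ / (σ ^ 2 * n) with hbdef
  have hy : (fun ω => (((∑ i, f i ω) / n) ^ 2 - μ ^ 2) / σ ^ 2) =
      fun ω => a * S ω ^ 2 + b * S ω := by
    funext ω
    have hsum : (∑ i, f i ω) = S ω + n * μ := by
      simp only [hSdef, hgdef, Finset.sum_sub_distrib, Finset.sum_const, Finset.card_univ,
        Fintype.card_fin, nsmul_eq_mul]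
      ring
    rw [hsum, hadef, hbdef]
    field_simp
    ring
  rw [hy]
  -- MemLp
  have hmem2 : MemLp (fun ω => S ω ^ 2) 2 P := by
    rw [memLp_two_iff_integrable_sq (by fun_prop : Measurable fun ω => S ω ^ 2).aestronglyMeasurable]
    have : (fun ω => (S ω ^ 2) ^ 2) = fun ω => S ω ^ 4 := by funext ω; ring
    rw [this]; exact hSint4
  have hmem1 : MemLp S 2 P := by
    rw [memLp_two_iff_integrable_sq hSmeas.aestronglyMeasurable]
    exact hSint2
  have hmemy : MemLp (fun ω => a * S ω ^ 2 + b * S ω) 2 P :=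
    (hmem2.const_mul a).add (hmem1.const_mul b)
  rw [variance_eq_sub hmemy]
  have hI1 : ∫ ω, (a * S ω ^ 2 + b * S ω) ∂P = a * (n * σ ^ 2) := by
    rw [integral_add ((hSint2).const_mul a) ((hSint1).const_mul b),
      integral_const_mul, integral_const_mul, S2, hS1]
    ring
  have hI2 : ∫ ω, (a * S ω ^ 2 + b * S ω) ^ 2 ∂P =
      a ^ 2 * (3 * (n:ℝ) ^ 2 * (σ ^ 2) ^ 2) + b ^ 2 * (n * σ ^ 2) := by
    have hexp : (fun ω => (a * S ω ^ 2 + b * S ω) ^ 2) =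
        fun ω => a ^ 2 * S ω ^ 4 + (2 * (a * b) * S ω ^ 3 + b ^ 2 * S ω ^ 2) := by
      funext ω; ring
    rw [hexp, integral_add ((hSint4).const_mul _)
        (show Integrable (fun ω => 2 * (a * b) * S ω ^ 3 + b ^ 2 * S ω ^ 2) P from
          ((hSint3).const_mul _).add ((hSint2).const_mul _)),
      integral_add ((hSint3).const_mul _) ((hSint2).const_mul _),
      integral_const_mul, integral_const_mul, integral_const_mul, S2, S3, S4]
    ring
  have hgoal1 : (fun ω => a * S ω ^ 2 + b * S ω) ^ 2 = fun ω => (a * S ω ^ 2 + b * S ω) ^ 2 := by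
    funext ω; simp
  rw [hgoal1, hI2]
  have : ∫ (x : Ω), (fun ω => a * S ω ^ 2 + b * S ω) x ∂P = a * (n * σ ^ 2) := hI1
  rw [this, hadef, hbdef]
  field_simp
  ring
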